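/- Let V be a real inner product space, and let A : V × V → ℝ be a bilinear form that is coercive with constant μ > 0 with respect to a seminorm ‖·‖_DG on V, i.e. A(v,v) ≥ μ‖v‖²_DG for all v ∈ V. Suppose u : [0,T] → V is differentiable with (C χ)(u'(t), u(t)) + A(u(t), u(t)) + R(t) = F(t) for all t, where C, χ > 0, R(t) ≥ −K for a constant K ≥ 0, and F(t) ≤ 0. Then for all t ∈ [0,T], (Cχ/2)‖u(t)‖² + μ∫₀ᵗ ‖u(s)‖²_DG ds ≤ (Cχ/2)‖u(0)‖² + Kt. -/

import Mathlib

open MeasureTheory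

theorem stmt_12 {V : Type*} [NormedAddCommGroup V] [InnerProductSpace ℝ V]
    (A : V →ₗ[ℝ] V →ₗ[ℝ] ℝ) (nDG : V → ℝ) (μ : ℝ) (hμ : 0 < μ)
    (hcoer : ∀ v : V, μ * nDG v ^ 2 ≤ A v v)
    (T C χ : ℝ) (hT : 0 ≤ T) (hC : 0 < C) (hχ : 0 < χ)
    (u u' : ℝ → V) (hu : ∀ t, HasDerivAt u (u' t) t)
    (R F : ℝ → ℝ) (K : ℝ) (hK : 0 ≤ K)
    (hR : ∀ t, -K ≤ R t) (hF : ∀ t, F t ≤ 0)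
    (heq : ∀ t, C * χ * (inner ℝ (u' t) (u t) : ℝ) + A (u t) (u t) + R t = F t) :
    ∀ t ∈ Set.Icc (0 : ℝ) T,
      C * χ / 2 * ‖u t‖ ^ 2 + μ * ∫ s in (0 : ℝ)..t, nDG (u s) ^ 2 ≤
        C * χ / 2 * ‖u 0‖ ^ 2 + K * t := by
  intro t ht
  obtain ⟨ht0, _⟩ := ht
  set h : ℝ → ℝ := fun s => C * χ / 2 * (inner ℝ (u s) (u s) : ℝ) with hh
  have hderiv : ∀ s, HasDerivAt h (C * χ * (inner ℝ (u' s) (u s) : ℝ)) s := by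
    intro s
    have h1 : HasDerivAt (fun x => (inner ℝ (u x) (u x) : ℝ))
        ((inner ℝ (u s) (u' s) : ℝ) + (inner ℝ (u' s) (u s) : ℝ)) s :=
      (hu s).inner ℝ (hu s)
    have h2 := h1.const_mul (C * χ / 2)
    have hcomm : (inner ℝ (u s) (u' s) : ℝ) = (inner ℝ (u' s) (u s) : ℝ) :=
      real_inner_comm _ _
    exact h2.congr_deriv (by rw [hcomm]; ring)
  have hbound : ∀ s, C * χ * (inner ℝ (u' s) (u s) : ℝ) ≤ K - μ * nDG (u s) ^ 2 := by
    intro s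
    have := heq s
    have h1 := hcoer (u s)
    have h2 := hR s
    have h3 := hF s
    linarith
  have main : ∀ φ : ℝ → ℝ, IntegrableOn φ (Set.Icc 0 t) →
      (∀ s, K - μ * nDG (u s) ^ 2 ≤ φ s) →
      h t - h 0 ≤ ∫ s in (0:ℝ)..t, φ s := by
    intro φ hφint hφle
    refine intervalIntegral.sub_le_integral_of_hasDeriv_right_of_le ht0
      (fun x _ => (hderiv x).continuousAt.continuousWithinAt)
      (fun x _ => (hderiv x).hasDerivWithinAt) hφint ?_
    intro x _
    exact (hbound x).trans (hφle x)
  have hnorm : ∀ s, h s = C * χ / 2 * ‖u s‖ ^ 2 := by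
    intro s
    rw [hh]
    simp [real_inner_self_eq_norm_sq]
  by_cases hint : IntervalIntegrable (fun s => nDG (u s) ^ 2) volume 0 t
  · have hIoc : IntegrableOn (fun s => nDG (u s) ^ 2) (Set.Ioc 0 t) :=
      (intervalIntegrable_iff_integrableOn_Ioc_of_le ht0).mp hint
    have hIcc : IntegrableOn (fun s => nDG (u s) ^ 2) (Set.Icc 0 t) := by
      rwa [integrableOn_Icc_iff_integrableOn_Ioc]
    have hφint : IntegrableOn (fun s => K - μ * nDG (u s) ^ 2) (Set.Icc 0 t) := by
      exact (integrableOn_const measure_Icc_lt_top.ne).sub (hIcc.const_mul μ)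
    have key := main _ hφint (fun s => le_rfl)
    have hsplit : (∫ s in (0:ℝ)..t, (K - μ * nDG (u s) ^ 2)) =
        K * t - μ * ∫ s in (0:ℝ)..t, nDG (u s) ^ 2 := by
      rw [intervalIntegral.integral_sub intervalIntegrable_const (hint.const_mul μ),
        intervalIntegral.integral_const, intervalIntegral.integral_const_mul]
      simp [mul_comm]
    rw [hsplit] at key
    rw [← hnorm t, ← hnorm 0]
    linarith
  · rw [intervalIntegral.integral_undef hint]
    have hφint : IntegrableOn (fun _ : ℝ => K) (Set.Icc 0 t) :=
      integrableOn_const measure_Icc_lt_top.ne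
    have key := main _ hφint (fun s => by nlinarith [sq_nonneg (nDG (u s))])
    rw [intervalIntegral.integral_const] at key
    rw [← hnorm t, ← hnorm 0]
    simp only [smul_eq_mul, sub_zero] at key
    have : t * K = K * t := mul_comm _ _
    linarith
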